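/- Let $A = \begin{pmatrix} a & b \\ \bar b & \bar a\end{pmatrix}$ be a (finite-dimensional) symplectic matrix, i.e., $\bar a^t a - b^t \bar b = 1$ and $\bar a^t b = b^t \bar a$, and let $Z$ be a symmetric matrix with $\bar Z Z < I$. Then $bZ + a$ is invertible, and $A\cdot Z := (\bar a Z + \bar b)(bZ+a)^{-1}$ is again symmetric with $\overline{A\cdot Z}(A\cdot Z) < I$; that is, the fractional-linear action of the symplectic group preserves the Siegel disc. -/

import Mathlib

open Matrix
open scoped ComplexOrder

/-- The fractional-linear action of a symplectic block matrix
`A = [[a,b],[b̄,ā]]` on the Siegel disc: `A·Z = (āZ + b̄)(bZ + a)⁻¹`. -/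
noncomputable def siegelAction {n : ℕ} (a b Z : Matrix (Fin n) (Fin n) ℂ) :
    Matrix (Fin n) (Fin n) ℂ :=
  (a.map (starRingEnd ℂ) * Z + b.map (starRingEnd ℂ)) * (b * Z + a)⁻¹

private lemma mapStar_eq {n : ℕ} (M : Matrix (Fin n) (Fin n) ℂ) :
    M.map (starRingEnd ℂ) = Mᵀᴴ := by
  ext i j
  simp [Matrix.conjTranspose_apply]

private lemma ctComm {n : ℕ} (M : Matrix (Fin n) (Fin n) ℂ) : Mᴴᵀ = Mᵀᴴ := by
  ext i j
  simp [Matrix.conjTranspose_apply]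

private lemma posDef_conj {n : ℕ} {A B : Matrix (Fin n) (Fin n) ℂ}
    (hA : A.PosDef) (hB : IsUnit B) : (Bᴴ * A * B).PosDef := by
  exact hA.conjTranspose_mul_mul_same (Matrix.mulVec_injective_of_isUnit hB)

/-- Let `A = [[a,b],[b̄,ā]]` be symplectic (`āᵗa - bᵗb̄ = 1`, `āᵗb = bᵗā`) and let `Z`
be symmetric with `Z̄Z < I`.  Then `bZ + a` is invertible and
`A·Z = (āZ + b̄)(bZ + a)⁻¹` is again symmetric with `(A·Z)‾(A·Z) < I`: the symplectic
group preserves the Siegel disc. -/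
theorem stmt18 (n : ℕ) (a b Z : Matrix (Fin n) (Fin n) ℂ)
    (h1 : aᴴ * a - bᵀ * b.map (starRingEnd ℂ) = 1)
    (h2 : aᴴ * b = bᵀ * a.map (starRingEnd ℂ))
    (hZ : Zᵀ = Z) (hZD : (1 - Z.map (starRingEnd ℂ) * Z).PosDef) :
    IsUnit (b * Z + a) ∧
    (siegelAction a b Z)ᵀ = siegelAction a b Z ∧
    (1 - (siegelAction a b Z).map (starRingEnd ℂ) * siegelAction a b Z).PosDef := by
  rw [mapStar_eq] at h1 h2
  rw [mapStar_eq, hZ] at hZD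
  set W : Matrix (Fin n) (Fin n) ℂ := b * Z + a with hW
  set V : Matrix (Fin n) (Fin n) ℂ :=
    a.map (starRingEnd ℂ) * Z + b.map (starRingEnd ℂ) with hV
  have hV' : V = aᵀᴴ * Z + bᵀᴴ := by rw [hV, mapStar_eq, mapStar_eq]
  have hX : siegelAction a b Z = V * W⁻¹ := rfl
  -- conjugated versions of the symplectic relations
  have h1c : aᵀ * aᵀᴴ - bᴴ * b = 1 := by
    have := congrArg Matrix.transpose h1
    simpa only [Matrix.transpose_sub, Matrix.transpose_mul, Matrix.transpose_one,
      Matrix.transpose_transpose, ctComm] using this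
  have h2c : bᴴ * a = aᵀ * bᵀᴴ := by
    have := congrArg Matrix.conjTranspose h2
    simpa only [Matrix.conjTranspose_mul, Matrix.conjTranspose_conjTranspose] using this
  -- the fundamental identity  Wᴴ W - Vᴴ V = 1 - Zᴴ Z
  have hWH : Wᴴ = Zᴴ * bᴴ + aᴴ := by
    rw [hW]; simp [Matrix.conjTranspose_add, Matrix.conjTranspose_mul]
  have hVH : Vᴴ = Zᴴ * aᵀ + bᵀ := by
    rw [hV']; simp [Matrix.conjTranspose_add, Matrix.conjTranspose_mul]
  have key : Wᴴ * W - Vᴴ * V = 1 - Zᴴ * Z := by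
    have expand : Wᴴ * W - Vᴴ * V =
        Zᴴ * (bᴴ * b - aᵀ * aᵀᴴ) * Z + Zᴴ * (bᴴ * a - aᵀ * bᵀᴴ) +
          (aᴴ * b - bᵀ * aᵀᴴ) * Z + (aᴴ * a - bᵀ * bᵀᴴ) := by
      rw [hWH, hVH, hW, hV']; noncomm_ring
    have e1 : bᴴ * b - aᵀ * aᵀᴴ = -1 := by rw [← neg_sub, h1c]
    have e2 : bᴴ * a - aᵀ * bᵀᴴ = 0 := sub_eq_zero.mpr h2c
    have e3 : aᴴ * b - bᵀ * aᵀᴴ = 0 := sub_eq_zero.mpr h2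
    rw [expand, e1, e2, e3, h1]
    noncomm_ring
  -- Wᴴ W is positive definite, hence W is invertible
  have hWW : (Wᴴ * W).PosDef := by
    have : Wᴴ * W = (1 - Zᴴ * Z) + Vᴴ * V := by rw [← key]; abel
    rw [this]
    exact hZD.add_posSemidef (Matrix.posSemidef_conjTranspose_mul_self V)
  have hWunit : IsUnit W := by
    have h := hWW.isUnit
    rw [Matrix.isUnit_iff_isUnit_det, Matrix.det_mul] at h
    exact (Matrix.isUnit_iff_isUnit_det _).mpr (isUnit_of_mul_isUnit_right h)
  have hdet : IsUnit W.det := (Matrix.isUnit_iff_isUnit_det _).mp hWunit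
  have hdetT : IsUnit Wᵀ.det := by rwa [Matrix.det_transpose]
  -- symmetry of the action
  have symm : Wᵀ * V = Vᵀ * W := by
    have hWT : Wᵀ = Z * bᵀ + aᵀ := by rw [hW]; simp [Matrix.transpose_add, Matrix.transpose_mul, hZ]
    have hVT : Vᵀ = Z * aᴴ + bᴴ := by
      rw [hV']
      simp [Matrix.transpose_add, Matrix.transpose_mul, ctComm, Matrix.transpose_transpose, hZ]
    have expand : Wᵀ * V - Vᵀ * W =
        Z * (bᵀ * aᵀᴴ - aᴴ * b) * Z + Z * (bᵀ * bᵀᴴ - aᴴ * a) +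
          (aᵀ * aᵀᴴ - bᴴ * b) * Z + (aᵀ * bᵀᴴ - bᴴ * a) := by
      rw [hWT, hVT, hW, hV']; noncomm_ring
    have e1 : bᵀ * aᵀᴴ - aᴴ * b = 0 := sub_eq_zero.mpr h2.symm
    have e2 : bᵀ * bᵀᴴ - aᴴ * a = -1 := by rw [← neg_sub, h1]
    have e3 : aᵀ * bᵀᴴ - bᴴ * a = 0 := sub_eq_zero.mpr h2c.symm
    have h0 : Wᵀ * V - Vᵀ * W = 0 := by rw [expand, e1, e2, e3, h1c]; noncomm_ring
    exact sub_eq_zero.mp h0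
  -- symmetry of  V W⁻¹
  have hXsymm : (V * W⁻¹)ᵀ = V * W⁻¹ := by
    have cancel : ∀ P Q : Matrix (Fin n) (Fin n) ℂ, Wᵀ * P = Wᵀ * Q → P = Q := by
      intro P Q h
      have := congrArg (fun M => (Wᵀ)⁻¹ * M) h
      simpa [← Matrix.mul_assoc, Matrix.nonsing_inv_mul _ hdetT] using this
    apply cancel
    have hXW : V * W⁻¹ * W = V := by
      rw [Matrix.mul_assoc, Matrix.nonsing_inv_mul _ hdet, Matrix.mul_one]
    have l : Wᵀ * (V * W⁻¹)ᵀ = Vᵀ := by rw [← Matrix.transpose_mul, hXW]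
    have r : Wᵀ * (V * W⁻¹) = Vᵀ := by
      rw [← Matrix.mul_assoc, symm, Matrix.mul_assoc, Matrix.mul_nonsing_inv _ hdet,
        Matrix.mul_one]
    rw [l, r]
  -- the final positive-definiteness
  have hfin : 1 - (V * W⁻¹)ᴴ * (V * W⁻¹) = (W⁻¹)ᴴ * (1 - Zᴴ * Z) * W⁻¹ := by
    rw [← key]
    have e : (W⁻¹)ᴴ * (Wᴴ * W - Vᴴ * V) * W⁻¹
        = (W * W⁻¹)ᴴ * (W * W⁻¹) - (V * W⁻¹)ᴴ * (V * W⁻¹) := by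
      simp only [Matrix.conjTranspose_mul]; noncomm_ring
    rw [e, Matrix.mul_nonsing_inv _ hdet]
    simp
  refine ⟨hWunit, ?_, ?_⟩
  · rw [hX]; exact hXsymm
  · rw [hX, mapStar_eq, hXsymm, hfin]
    exact posDef_conj hZD (Matrix.isUnit_nonsing_inv_iff.mpr hWunit)
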